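/- Let S be the wreathed 2-group generated by x, y, z with relations x^{2ⁿ} = y^{2ⁿ} = z² = 1, xy = yx, zxz⁻¹ = y (n ≥ 2). Define the degree-3 complex representation κ of S by κ(x) = diag(α, α, α⁻²), κ(y) = diag(α, α⁻², α), and κ(z) the matrix fixing the first basis vector up to sign −1 and swapping the other two, where α is a primitive 2ⁿ-th root of unity. Then κ is a well-defined group homomorphism S → GL₃(ℂ), and its character ν satisfies ν(g) = −1 for every involution g ∈ S. -/

import Mathlib

open Matrix

private lemma zswap {G : Type*} [Group G] {X Y Z : G} (hZ : Z^2 = 1) (hZX : Z*X*Z⁻¹ = Y) :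
    (∀ k : ℕ, Z * X^k = Y^k * Z) ∧ (∀ k : ℕ, Z * Y^k = X^k * Z) := by
  have hZZ : Z * Z = 1 := by rw [← sq]; exact hZ
  have hZinv : Z⁻¹ = Z := inv_eq_of_mul_eq_one_right hZZ
  have h1 : Z * X = Y * Z := by rw [← hZX, hZinv, mul_assoc, mul_assoc, hZZ, mul_one]
  have h2 : Z * Y = X * Z := by
    have h3 : Z * Y * Z = X := by
      rw [← hZX, hZinv, mul_assoc, mul_assoc, mul_assoc, hZZ, mul_one, ← mul_assoc, hZZ, one_mul]
    calc Z * Y = (Z * Y * Z) * Z := by rw [mul_assoc, hZZ, mul_one]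
    _ = X * Z := by rw [h3]
  constructor
  · intro k
    induction k with
    | zero => simp
    | succ k ih => rw [pow_succ, ← mul_assoc, ih, mul_assoc, h1, pow_succ, mul_assoc]
  · intro k
    induction k with
    | zero => simp
    | succ k ih => rw [pow_succ, ← mul_assoc, ih, mul_assoc, h2, pow_succ, mul_assoc]

private lemma nf_lemma {G : Type*} [Group G] (N : ℕ) (hN : N ≠ 0) (X Y Z : G)
    (hX : X^N = 1) (hZ : Z^2 = 1) (hXY : X*Y = Y*X) (hZX : Z*X*Z⁻¹ = Y)
    (w : FreeGroup (Fin 3)) :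
    ∃ a b e : ℕ, FreeGroup.lift ![X,Y,Z] w = X^a * Y^b * Z^e := by
  obtain ⟨hzx, hzy⟩ := zswap hZ hZX
  have hZZ : Z * Z = 1 := by rw [← sq]; exact hZ
  have hZinv : Z⁻¹ = Z := inv_eq_of_mul_eq_one_right hZZ
  have hc : Commute X Y := hXY
  induction w using FreeGroup.induction_on with
  | C1 => exact ⟨0, 0, 0, by simp⟩
  | of i =>
    fin_cases i
    · refine ⟨1, 0, 0, ?_⟩
      simp only [pow_one, pow_zero, mul_one]
      exact FreeGroup.lift_apply_of
    · refine ⟨0, 1, 0, ?_⟩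
      simp only [pow_one, pow_zero, mul_one, one_mul]
      exact FreeGroup.lift_apply_of
    · refine ⟨0, 0, 1, ?_⟩
      simp only [pow_one, pow_zero, mul_one, one_mul]
      exact FreeGroup.lift_apply_of
  | inv_of i _ =>
    fin_cases i
    · refine ⟨N-1, 0, 0, ?_⟩
      have h0 : (FreeGroup.lift ![X,Y,Z]) (FreeGroup.of (⟨0, by omega⟩ : Fin 3)) = X :=
        FreeGroup.lift_apply_of
      simp only [_root_.map_inv, h0]
      simp only [pow_zero, mul_one]
      rw [inv_eq_iff_mul_eq_one, ← pow_succ']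
      have hN1 : N - 1 + 1 = N := by omega
      rwa [hN1]
    · refine ⟨0, N-1, 0, ?_⟩
      have h0 : (FreeGroup.lift ![X,Y,Z]) (FreeGroup.of (⟨1, by omega⟩ : Fin 3)) = Y :=
        FreeGroup.lift_apply_of
      simp only [_root_.map_inv, h0]
      simp only [pow_zero, mul_one, one_mul]
      have hY : Y^N = 1 := by rw [← hZX, conj_pow, hX]; group
      rw [inv_eq_iff_mul_eq_one, ← pow_succ']
      have hN1 : N - 1 + 1 = N := by omega
      rwa [hN1]
    · refine ⟨0, 0, 1, ?_⟩
      have h0 : (FreeGroup.lift ![X,Y,Z]) (FreeGroup.of (⟨2, by omega⟩ : Fin 3)) = Z :=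
        FreeGroup.lift_apply_of
      simp only [_root_.map_inv, h0]
      simp [hZinv]
  | mul u v hu hv =>
    obtain ⟨a, b, e, hu⟩ := hu
    obtain ⟨c, d, f, hv⟩ := hv
    rw [_root_.map_mul, hu, hv]
    have hZe : Z^e = Z^(e % 2) := pow_eq_pow_mod e hZ
    rcases Nat.mod_two_eq_zero_or_one e with h | h
    · refine ⟨a + c, b + d, f, ?_⟩
      rw [hZe, h, pow_zero, mul_one, pow_add, pow_add]
      have hbc := (hc.symm.pow_pow b c).eq
      calc X^a * Y^b * (X^c * Y^d * Z^f)
          = X^a * (Y^b * X^c) * Y^d * Z^f := by group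
        _ = X^a * (X^c * Y^b) * Y^d * Z^f := by rw [hbc]
        _ = X ^ a * X ^ c * (Y ^ b * Y ^ d) * Z ^ f := by group
    · refine ⟨a + d, b + c, 1 + f, ?_⟩
      rw [hZe, h, pow_one, pow_add, pow_add, pow_add, pow_one]
      have h1 : Z * (X^c * Y^d) = X^d * Y^c * Z := by
        rw [← mul_assoc, hzx, mul_assoc, hzy, ← mul_assoc, (hc.symm.pow_pow c d).eq]
      have h2 := (hc.symm.pow_pow b d).eq
      calc X^a * Y^b * Z * (X^c * Y^d * Z^f)
          = X^a * Y^b * (Z * (X^c * Y^d)) * Z^f := by group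
        _ = X^a * Y^b * (X^d * Y^c * Z) * Z^f := by rw [h1]
        _ = X^a * (Y^b * X^d) * Y^c * (Z * Z^f) := by group
        _ = X^a * (X^d * Y^b) * Y^c * (Z * Z^f) := by rw [h2]
        _ = X^a * X^d * (Y^b * Y^c) * (Z * Z^f) := by group

theorem stmt_12 {S : Type} [Group S] [Fintype S] (n : ℕ) (hn : 2 ≤ n)
    -- `S` is the wreathed 2-group of order `2^(2n+1)`
    (hcard : Nat.card S = 2 ^ (2 * n + 1))
    (x y z : S) (hgen : Subgroup.closure {x, y, z} = ⊤)
    (hx : x ^ 2 ^ n = 1) (hy : y ^ 2 ^ n = 1) (hz : z ^ 2 = 1)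
    (hcomm : x * y = y * x) (hconj : z * x * z⁻¹ = y)
    -- `α` is a primitive `2^n`-th root of unity
    (α : ℂ) (hα : IsPrimitiveRoot α (2 ^ n)) :
    -- `κ` is a well-defined homomorphism `S → GL₃(ℂ)` with the prescribed values
    ∃ κ : S →* GL (Fin 3) ℂ,
      (κ x : Matrix (Fin 3) (Fin 3) ℂ) = Matrix.diagonal ![α, α, α⁻¹ ^ 2] ∧
      (κ y : Matrix (Fin 3) (Fin 3) ℂ) = Matrix.diagonal ![α, α⁻¹ ^ 2, α] ∧
      (κ z : Matrix (Fin 3) (Fin 3) ℂ) = !![-1, 0, 0; 0, 0, 1; 0, 1, 0] ∧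
      -- the character `ν = tr ∘ κ` takes the value `-1` on every involution
      ∀ g : S, orderOf g = 2 → Matrix.trace (κ g : Matrix (Fin 3) (Fin 3) ℂ) = -1 := by
  classical
  set N : ℕ := 2 ^ n with hNdef
  have hNpos : 0 < N := pow_pos (by norm_num : (0:ℕ) < 2) n
  haveI : NeZero N := ⟨hNpos.ne'⟩
  -- matrices
  set A : Matrix (Fin 3) (Fin 3) ℂ := Matrix.diagonal ![α, α, α⁻¹ ^ 2] with hAdef
  set B : Matrix (Fin 3) (Fin 3) ℂ := Matrix.diagonal ![α, α⁻¹ ^ 2, α] with hBdef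
  set C : Matrix (Fin 3) (Fin 3) ℂ := !![-1, 0, 0; 0, 0, 1; 0, 1, 0] with hCdef
  have hdiag3 : ∀ p q r : ℂ, Matrix.diagonal ![p,q,r] = !![p,0,0;0,q,0;0,0,r] := by
    intro p q r
    ext i j; fin_cases i <;> fin_cases j <;>
      simp [Matrix.diagonal_apply, Matrix.vecHead, Matrix.vecTail]
  -- root of unity facts
  have hαN : α ^ N = 1 := hα.pow_eq_one
  have hβN : (α⁻¹ ^ 2) ^ N = 1 := by
    rw [← pow_mul, inv_pow, mul_comm, pow_mul, hαN, one_pow, inv_one]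
  have hγN : ((α ^ 2) : ℂ) ^ N = 1 := by
    rw [← pow_mul, mul_comm, pow_mul, hαN, one_pow]
  -- matrix relations
  have hAN : A ^ N = 1 := by
    rw [hAdef, Matrix.diagonal_pow]
    have : (![α, α, α⁻¹ ^ 2]) ^ N = fun _ => (1:ℂ) := by
      funext i; fin_cases i <;> simp [hαN, hβN, hγN]
    rw [this, Matrix.diagonal_one]
  have hBN : B ^ N = 1 := by
    rw [hBdef, Matrix.diagonal_pow]
    have : (![α, α⁻¹ ^ 2, α]) ^ N = fun _ => (1:ℂ) := by
      funext i; fin_cases i <;> simp [hαN, hβN, hγN]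
    rw [this, Matrix.diagonal_one]
  have hCC : C * C = 1 := by
    rw [hCdef, Matrix.mul_fin_three, Matrix.one_fin_three]; norm_num
  have hAB : A * B = B * A := by
    rw [hAdef, hBdef, Matrix.diagonal_mul_diagonal, Matrix.diagonal_mul_diagonal]
    ext k l
    fin_cases k <;> fin_cases l <;>
      simp [Matrix.diagonal_apply, Matrix.vecHead, Matrix.vecTail, mul_comm]
  have hCAC : C * A * C = B := by
    rw [hAdef, hBdef, hCdef, hdiag3, hdiag3, Matrix.mul_fin_three, Matrix.mul_fin_three]
    norm_num
  -- units
  obtain ⟨Au, hAuval, hAuN⟩ :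
      ∃ u : GL (Fin 3) ℂ, (u : Matrix (Fin 3) (Fin 3) ℂ) = A ∧ u ^ N = 1 := by
    refine ⟨⟨A, A ^ (N-1), ?_, ?_⟩, rfl, ?_⟩
    · rw [← pow_succ']
      have : N - 1 + 1 = N := by omega
      rw [this, hAN]
    · rw [← pow_succ]
      have : N - 1 + 1 = N := by omega
      rw [this, hAN]
    · ext1
      rw [Units.val_pow_eq_pow_val, Units.val_one]
      exact hAN
  obtain ⟨Bu, hBuval, hBuN⟩ :
      ∃ u : GL (Fin 3) ℂ, (u : Matrix (Fin 3) (Fin 3) ℂ) = B ∧ u ^ N = 1 := by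
    refine ⟨⟨B, B ^ (N-1), ?_, ?_⟩, rfl, ?_⟩
    · rw [← pow_succ']
      have : N - 1 + 1 = N := by omega
      rw [this, hBN]
    · rw [← pow_succ]
      have : N - 1 + 1 = N := by omega
      rw [this, hBN]
    · ext1
      rw [Units.val_pow_eq_pow_val, Units.val_one]
      exact hBN
  obtain ⟨Cu, hCuval, hCu2⟩ :
      ∃ u : GL (Fin 3) ℂ, (u : Matrix (Fin 3) (Fin 3) ℂ) = C ∧ u ^ 2 = 1 := by
    refine ⟨⟨C, C, hCC, hCC⟩, rfl, ?_⟩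
    ext1
    rw [Units.val_pow_eq_pow_val, Units.val_one, sq]
    exact hCC
  have hCuCu : Cu * Cu = 1 := by rw [← sq]; exact hCu2
  have hCuinv : Cu⁻¹ = Cu := inv_eq_of_mul_eq_one_right hCuCu
  have hABu : Au * Bu = Bu * Au := by
    ext1
    rw [Units.val_mul, Units.val_mul, hAuval, hBuval, hAB]
  have hCACu : Cu * Au * Cu⁻¹ = Bu := by
    rw [hCuinv]
    ext1
    rw [Units.val_mul, Units.val_mul, hAuval, hBuval, hCuval, hCAC]
  -- the product group
  set XP : S × GL (Fin 3) ℂ := (x, Au) with hXPdef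
  set YP : S × GL (Fin 3) ℂ := (y, Bu) with hYPdef
  set ZP : S × GL (Fin 3) ℂ := (z, Cu) with hZPdef
  have hXPN : XP ^ N = 1 := Prod.ext_iff.mpr ⟨by simp [hXPdef, hx], by simp [hXPdef, hAuN]⟩
  have hZP2 : ZP ^ 2 = 1 := Prod.ext_iff.mpr ⟨by simp [hZPdef, hz], by simp [hZPdef, hCu2]⟩
  have hXYP : XP * YP = YP * XP :=
    Prod.ext_iff.mpr ⟨by simp [hXPdef, hYPdef, hcomm], by simp [hXPdef, hYPdef, hABu]⟩
  have hZXP : ZP * XP * ZP⁻¹ = YP :=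
    Prod.ext_iff.mpr ⟨by simp [hXPdef, hYPdef, hZPdef, hconj],
      by simp [hXPdef, hYPdef, hZPdef, hCACu]⟩
  set F : FreeGroup (Fin 3) →* S × GL (Fin 3) ℂ := FreeGroup.lift ![XP, YP, ZP] with hFdef
  have nf : ∀ w, ∃ a b e : ℕ, F w = XP^a * YP^b * ZP^e := fun w =>
    nf_lemma N hNpos.ne' XP YP ZP hXPN hZP2 hXYP hZXP w
  have hsplit : ∀ a b e : ℕ,
      XP^a * YP^b * ZP^e = (x^a * y^b * z^e, Au^a * Bu^b * Cu^e) := by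
    intro a b e
    refine Prod.ext_iff.mpr ⟨?_, ?_⟩ <;> simp [hXPdef, hYPdef, hZPdef]
  -- the surjection onto S
  set f : FreeGroup (Fin 3) →* S := (MonoidHom.fst S (GL (Fin 3) ℂ)).comp F with hfdef
  have hfof0 : f (FreeGroup.of 0) = x := by
    show ((FreeGroup.lift ![XP, YP, ZP]) (FreeGroup.of 0)).1 = x
    rw [FreeGroup.lift_apply_of]; rfl
  have hfof1 : f (FreeGroup.of 1) = y := by
    show ((FreeGroup.lift ![XP, YP, ZP]) (FreeGroup.of 1)).1 = y
    rw [FreeGroup.lift_apply_of]; rfl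
  have hfof2 : f (FreeGroup.of 2) = z := by
    show ((FreeGroup.lift ![XP, YP, ZP]) (FreeGroup.of 2)).1 = z
    rw [FreeGroup.lift_apply_of]; rfl
  have hfsurj : Function.Surjective f := by
    have hle : Subgroup.closure {x, y, z} ≤ f.range := by
      rw [Subgroup.closure_le]
      intro s hs
      simp only [Set.mem_insert_iff, Set.mem_singleton_iff] at hs
      rcases hs with rfl | rfl | rfl
      · exact ⟨FreeGroup.of 0, hfof0⟩
      · exact ⟨FreeGroup.of 1, hfof1⟩
      · exact ⟨FreeGroup.of 2, hfof2⟩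
    have : f.range = ⊤ := top_le_iff.mp (hgen ▸ hle)
    intro s
    have : s ∈ f.range := this ▸ Subgroup.mem_top s
    exact this
  -- reduction of exponents
  have powval : ∀ (u : S), u ^ N = 1 → ∀ a : ℕ, u ^ a = u ^ ((a : ZMod N)).val := by
    intro u hu a; rw [ZMod.val_natCast]; exact pow_eq_pow_mod a hu
  have powval2 : ∀ a : ℕ, z ^ a = z ^ ((a : ZMod 2)).val := by
    intro a; rw [ZMod.val_natCast]; exact pow_eq_pow_mod a hz
  -- the counting bijection
  set Φ : ZMod N × ZMod N × ZMod 2 → S :=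
    fun p => x ^ p.1.val * y ^ p.2.1.val * z ^ p.2.2.val with hΦdef
  have hΦsurj : Function.Surjective Φ := by
    intro s
    obtain ⟨w, hw⟩ := hfsurj s
    obtain ⟨a, b, e, hnf⟩ := nf w
    refine ⟨((a : ZMod N), (b : ZMod N), (e : ZMod 2)), ?_⟩
    have h1 : f w = x^a * y^b * z^e := by
      show (F w).1 = _
      rw [hnf, hsplit]
    rw [hΦdef]
    simp only
    rw [← powval x hx a, ← powval y hy b, ← powval2 e, ← h1, hw]
  have hcards : Fintype.card (ZMod N × ZMod N × ZMod 2) = Fintype.card S := by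
    rw [Fintype.card_prod, Fintype.card_prod, ZMod.card, ZMod.card,
      ← Nat.card_eq_fintype_card, hcard, hNdef]
    rw [← pow_succ, ← pow_add]
    congr 1
    omega
  have hΦinj : Function.Injective Φ :=
    ((Fintype.bijective_iff_surjective_and_card Φ).mpr ⟨hΦsurj, hcards⟩).injective
  have hone : ∀ i j e : ℕ, x^i * y^j * z^e = 1 → N ∣ i ∧ N ∣ j ∧ 2 ∣ e := by
    intro i j e hije
    have hΦ0 : ∀ (a b : ZMod N) (c : ZMod 2),
        Φ (a, b, c) = x ^ a.val * y ^ b.val * z ^ c.val := fun a b c => by rw [hΦdef]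
    have h0 : Φ ((i : ZMod N), (j : ZMod N), (e : ZMod 2)) = Φ (0, 0, 0) := by
      rw [hΦ0, hΦ0, ← powval x hx i, ← powval y hy j, ← powval2 e, hije]
      simp
    have h1 := hΦinj h0
    rw [Prod.ext_iff, Prod.ext_iff] at h1
    obtain ⟨e1, e2, e3⟩ := h1
    exact ⟨(ZMod.natCast_eq_zero_iff i N).mp e1,
      (ZMod.natCast_eq_zero_iff j N).mp e2,
      (ZMod.natCast_eq_zero_iff e 2).mp e3⟩
  have hdecomp : ∀ g : S, ∃ i j e : ℕ, i < N ∧ j < N ∧ e < 2 ∧ g = x^i * y^j * z^e := by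
    intro g
    obtain ⟨⟨a, b, e⟩, hp⟩ := hΦsurj g
    exact ⟨a.val, b.val, e.val, a.val_lt, b.val_lt, e.val_lt, hp.symm⟩
  -- construct κ
  set ρ : FreeGroup (Fin 3) →* GL (Fin 3) ℂ := (MonoidHom.snd S (GL (Fin 3) ℂ)).comp F
    with hρdef
  have hρw : ∀ w a b e, F w = XP^a * YP^b * ZP^e → ρ w = Au^a * Bu^b * Cu^e := by
    intro w a b e hw
    show (F w).2 = _
    rw [hw, hsplit]
  have hfw : ∀ w a b e, F w = XP^a * YP^b * ZP^e → f w = x^a * y^b * z^e := by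
    intro w a b e hw
    show (F w).1 = _
    rw [hw, hsplit]
  have hker : f.ker ≤ ρ.ker := by
    intro w hw
    rw [MonoidHom.mem_ker] at hw ⊢
    obtain ⟨a, b, e, hnf⟩ := nf w
    obtain ⟨⟨ka, hka⟩, ⟨kb, hkb⟩, ⟨ke, hke⟩⟩ :=
      hone a b e (by rw [← hfw w a b e hnf]; exact hw)
    rw [hρw w a b e hnf, hka, hkb, hke, pow_mul, pow_mul, pow_mul, hAuN, hBuN, hCu2,
      one_pow, one_pow, one_pow, one_mul, one_mul]
  set κ : S →* GL (Fin 3) ℂ :=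
    f.liftOfRightInverse (Function.surjInv hfsurj)
      (Function.rightInverse_surjInv hfsurj) ⟨ρ, hker⟩ with hκdef
  have hκf : ∀ w, κ (f w) = ρ w := fun w =>
    f.liftOfRightInverse_comp_apply (Function.surjInv hfsurj)
      (Function.rightInverse_surjInv hfsurj) ⟨ρ, hker⟩ w
  have hκx : κ x = Au := by
    have := hκf (FreeGroup.of 0)
    rw [hfof0] at this
    rw [this]
    show ((FreeGroup.lift ![XP, YP, ZP]) (FreeGroup.of 0)).2 = Au
    rw [FreeGroup.lift_apply_of]; rfl
  have hκy : κ y = Bu := by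
    have := hκf (FreeGroup.of 1)
    rw [hfof1] at this
    rw [this]
    show ((FreeGroup.lift ![XP, YP, ZP]) (FreeGroup.of 1)).2 = Bu
    rw [FreeGroup.lift_apply_of]; rfl
  have hκz : κ z = Cu := by
    have := hκf (FreeGroup.of 2)
    rw [hfof2] at this
    rw [this]
    show ((FreeGroup.lift ![XP, YP, ZP]) (FreeGroup.of 2)).2 = Cu
    rw [FreeGroup.lift_apply_of]; rfl
  have hκform : ∀ i j e : ℕ,
      ((κ (x^i * y^j * z^e) : GL (Fin 3) ℂ) : Matrix (Fin 3) (Fin 3) ℂ)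
        = A^i * B^j * C^e := by
    intro i j e
    rw [_root_.map_mul, _root_.map_mul, _root_.map_pow, _root_.map_pow,
      _root_.map_pow, hκx, hκy, hκz,
      Units.val_mul, Units.val_mul, Units.val_pow_eq_pow_val, Units.val_pow_eq_pow_val,
      Units.val_pow_eq_pow_val, hAuval, hBuval, hCuval]
  refine ⟨κ, by rw [hκx, hAuval], by rw [hκy, hBuval], by rw [hκz, hCuval], ?_⟩
  -- character values on involutions
  -- auxiliary: powers of the primitive root
  have hh2 : 2 * 2^(n-1) = N := by
    rw [hNdef, ← pow_succ']
    congr 1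
    omega
  have hαh : α ^ (2^(n-1)) = -1 := by
    have hsq : (α ^ (2^(n-1)))^2 = 1 := by
      rw [← pow_mul, mul_comm, hh2, hαN]
    have hne : α ^ (2^(n-1)) ≠ 1 := by
      refine hα.pow_ne_one_of_pos_of_lt (Nat.pow_pos (n := n-1) (by norm_num : 0 < 2)).ne' ?_
      rw [hNdef]
      exact Nat.pow_lt_pow_right (by norm_num) (by omega)
    have hfac : (α ^ (2^(n-1)) - 1) * (α ^ (2^(n-1)) + 1) = 0 := by
      linear_combination hsq
    rcases mul_eq_zero.mp hfac with h' | h'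
    · exact absurd (sub_eq_zero.mp h') hne
    · exact eq_neg_of_add_eq_zero_left h'
  have hβh : (α⁻¹ ^ 2) ^ (2^(n-1)) = 1 := by
    rw [← pow_mul, hh2, inv_pow, hαN, inv_one]
  have htrace0 : ∀ i j : ℕ, Matrix.trace (A^i * B^j)
      = α^i*α^j + α^i*(α⁻¹^2)^j + (α⁻¹^2)^i*α^j := by
    intro i j
    have hprod : A^i * B^j
        = Matrix.diagonal ![α^i*α^j, α^i*(α⁻¹^2)^j, (α⁻¹^2)^i*α^j] := by
      rw [hAdef, hBdef, Matrix.diagonal_pow, Matrix.diagonal_pow,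
        Matrix.diagonal_mul_diagonal]
      ext k l
      fin_cases k <;> fin_cases l <;>
        simp [Matrix.diagonal_apply, Matrix.vecHead, Matrix.vecTail]
    rw [hprod, Matrix.trace_diagonal, Fin.sum_univ_three]
    simp
  have htraceC : ∀ i j : ℕ, Matrix.trace (A^i * B^j * C) = -(α^i * α^j) := by
    intro i j
    have hprod : A^i * B^j
        = Matrix.diagonal ![α^i*α^j, α^i*(α⁻¹^2)^j, (α⁻¹^2)^i*α^j] := by
      rw [hAdef, hBdef, Matrix.diagonal_pow, Matrix.diagonal_pow,
        Matrix.diagonal_mul_diagonal]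
      ext k l
      fin_cases k <;> fin_cases l <;>
        simp [Matrix.diagonal_apply, Matrix.vecHead, Matrix.vecTail]
    rw [hprod, hdiag3, hCdef, Matrix.mul_fin_three]
    simp [Matrix.trace_fin_three]
  intro g hg
  have hg2 : g ^ 2 = 1 := by rw [← hg]; exact pow_orderOf_eq_one g
  have hg1 : g ≠ 1 := by
    intro hgg; rw [hgg, orderOf_one] at hg; norm_num at hg
  obtain ⟨i, j, e, hiN, hjN, he2, rfl⟩ := hdecomp g
  have hcS : Commute x y := hcomm
  obtain ⟨hzxS, hzyS⟩ := zswap hz hconj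
  have hdvd_cases : ∀ k : ℕ, k < N → N ∣ 2 * k → k = 0 ∨ k = 2^(n-1) := by
    rintro k hk ⟨m, hm⟩
    have hmlt : m < 2 := by
      by_contra hc
      push_neg at hc
      have : N * 2 ≤ N * m := Nat.mul_le_mul_left N hc
      omega
    interval_cases m <;> omega
  interval_cases e
  · -- e = 0
    have hsq : x^(2*i) * y^(2*j) * z^0 = 1 := by
      rw [pow_zero, mul_one]
      have hcij := (hcS.symm.pow_pow j i).eq
      have hstep : (x^i * y^j * z^0)^2 = x^(2*i) * y^(2*j) := by
        rw [pow_zero, mul_one, sq]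
        calc x^i*y^j*(x^i*y^j) = x^i*(y^j*x^i)*y^j := by group
          _ = x^i*(x^i*y^j)*y^j := by rw [hcij]
          _ = x^(2*i)*y^(2*j) := by rw [two_mul, two_mul, pow_add, pow_add]; group
      rw [← hstep]; exact hg2
    obtain ⟨hdi, hdj, -⟩ := hone _ _ _ hsq
    rcases hdvd_cases i hiN hdi with rfl | hieq <;>
      rcases hdvd_cases j hjN hdj with rfl | hjeq
    · exact absurd (by simp) hg1
    · subst hjeq
      rw [hκform, show C ^ 0 = (1 : Matrix (Fin 3) (Fin 3) ℂ) from pow_zero C,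
        mul_one, htrace0, hαh, hβh]
      norm_num
    · subst hieq
      rw [hκform, show C ^ 0 = (1 : Matrix (Fin 3) (Fin 3) ℂ) from pow_zero C,
        mul_one, htrace0, hαh, hβh]
      norm_num
    · subst hieq; subst hjeq
      rw [hκform, show C ^ 0 = (1 : Matrix (Fin 3) (Fin 3) ℂ) from pow_zero C,
        mul_one, htrace0, hαh, hβh]
      norm_num
  · -- e = 1
    have hzz : z * z = 1 := by rw [← sq]; exact hz
    have hsq : x^(i+j) * y^(i+j) * z^0 = 1 := by
      rw [pow_zero, mul_one]
      have hstep : (x^i*y^j*z^1)^2 = x^(i+j)*y^(i+j) := by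
        rw [pow_one, sq]
        calc x^i*y^j*z*(x^i*y^j*z)
            = x^i*y^j*(z*x^i)*(y^j*z) := by group
          _ = x^i*y^j*(y^i*z)*(y^j*z) := by rw [hzxS i]
          _ = x^i*(y^j*y^i)*(z*y^j)*z := by group
          _ = x^i*(y^j*y^i)*(x^j*z)*z := by rw [hzyS j]
          _ = x^i*(y^(j+i)*x^j)*(z*z) := by rw [pow_add]; group
          _ = x^i*(x^j*y^(j+i))*(z*z) := by rw [(hcS.symm.pow_pow (j+i) j).eq]
          _ = x^(i+j)*y^(i+j)*(z*z) := by rw [add_comm j i]; group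
          _ = x^(i+j)*y^(i+j) := by rw [hzz, mul_one]
      rw [← hstep]; exact hg2
    obtain ⟨hdij, -, -⟩ := hone _ _ _ hsq
    obtain ⟨m, hm⟩ := hdij
    rw [hκform, show C ^ 1 = C from pow_one C, htraceC, ← pow_add, hm, pow_mul,
      hαN, one_pow]
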